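/- Let 2 ≤ k ≤ v. The block set ℬ of any cyclic (v,k)-configuration is necessarily the set of all v translates X+t (t ∈ Z_v) of a single block X ∈ ℬ, and this block X is a (v,k)-modular Golomb ruler. -/

import Mathlib

/-- A symmetric (v,k)-configuration on the point set `ZMod v`: `v` blocks of size `k`,
no pair of distinct points in more than one block, every point in exactly `k` blocks. -/
def IsConfig (v k : ℕ) (B : Finset (Finset (ZMod v))) : Prop :=
  B.card = v ∧
  (∀ b ∈ B, b.card = k) ∧
  (∀ b₁ ∈ B, ∀ b₂ ∈ B, ∀ x y : ZMod v,
    x ≠ y → x ∈ b₁ → y ∈ b₁ → x ∈ b₂ → y ∈ b₂ → b₁ = b₂) ∧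
  (∀ x : ZMod v, (B.filter (fun b => x ∈ b)).card = k)

/-- A parallel class: a set of pairwise disjoint blocks whose union is the point set. -/
def IsParallelClass (v : ℕ) (P : Finset (Finset (ZMod v))) : Prop :=
  (∀ x : ZMod v, ∃ b ∈ P, x ∈ b) ∧
  (∀ b₁ ∈ P, ∀ b₂ ∈ P, b₁ ≠ b₂ → Disjoint b₁ b₂)

/-- A resolution of the block set `B` into `r` parallel classes. -/
def IsResolution (v r : ℕ) (B : Finset (Finset (ZMod v)))
    (R : Finset (Finset (Finset (ZMod v)))) : Prop :=
  R.card = r ∧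
  (∀ P ∈ R, P ⊆ B ∧ IsParallelClass v P) ∧
  (∀ b ∈ B, ∃! P, P ∈ R ∧ b ∈ P)

/-- The block set is invariant under the translation x ↦ x + 1 (mod v). -/
def CyclicBlocks (v : ℕ) (B : Finset (Finset (ZMod v))) : Prop :=
  ∀ b ∈ B, b.image (· + 1) ∈ B

/-- The resolution is invariant under the translation x ↦ x + 1 (mod v). -/
def CyclicResolution (v : ℕ) (R : Finset (Finset (Finset (ZMod v)))) : Prop :=
  ∀ P ∈ R, P.image (fun b => b.image (· + 1)) ∈ R

/-- A (v,k)-modular Golomb ruler: a k-subset of `ZMod v` whose differences of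
ordered pairs of distinct elements are pairwise distinct in `ZMod v`. -/
def IsMGR (v k : ℕ) (X : Finset (ZMod v)) : Prop :=
  X.card = k ∧
  ∀ a ∈ X, ∀ b ∈ X, ∀ c ∈ X, ∀ d ∈ X,
    a - b = c - d → (a = b ∧ c = d) ∨ (a = c ∧ b = d)

/-- A (v,k)-resolvable modular Golomb ruler: a (v,k)-MGR whose elements
(taken as their canonical representatives in {0,…,v−1}) cover all k residue
classes modulo k. -/
def IsRMGR (v k : ℕ) (X : Finset (ZMod v)) : Prop :=
  IsMGR v k X ∧ ∀ r : ZMod k, ∃ x ∈ X, ((x.val : ZMod k) = r)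

/-- The set of all v translates of X in `ZMod v`. -/
def AllTranslates (v : ℕ) (X : Finset (ZMod v)) : Finset (Finset (ZMod v)) :=
  (Finset.range v).image (fun t : ℕ => X.image (· + (t : ZMod v)))

section Aux

variable {v : ℕ}

private lemma img_add (X : Finset (ZMod v)) (a b : ZMod v) :
    (X.image (· + a)).image (· + b) = X.image (· + (a + b)) := by
  rw [Finset.image_image]
  have h : ((· + b) ∘ (· + a)) = (fun x : ZMod v => x + (a + b)) := by
    funext x; simp [Function.comp, add_assoc]
  rw [h]

private lemma closure_lemma [NeZero v] (B : Finset (Finset (ZMod v)))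
    (hcyc : CyclicBlocks v B) : ∀ b ∈ B, ∀ t : ZMod v, b.image (· + t) ∈ B := by
  have hnat : ∀ n : ℕ, ∀ b ∈ B, b.image (· + (n : ZMod v)) ∈ B := by
    intro n
    induction n with
    | zero =>
      intro b hb
      simpa only [Nat.cast_zero, add_zero, Finset.image_id'] using hb
    | succ n ih =>
      intro b hb
      have h1 := hcyc _ (ih b hb)
      rw [img_add] at h1
      have h2 : ((n : ZMod v) + 1) = (((n + 1 : ℕ)) : ZMod v) := by push_cast; ring
      rwa [h2] at h1
  intro b hb t
  obtain ⟨n, rfl⟩ := ZMod.natCast_zmod_surjective t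
  exact hnat n b hb

/-- The stabilizer of a finset under translation, as an additive subgroup. -/
private def stabSub (X : Finset (ZMod v)) : AddSubgroup (ZMod v) where
  carrier := {t | X.image (· + t) = X}
  zero_mem' := by
    show X.image (· + (0 : ZMod v)) = X
    simp only [add_zero, Finset.image_id']
  add_mem' := by
    intro a b ha hb
    show X.image (· + (a + b)) = X
    rw [← img_add, ha, hb]
  neg_mem' := by
    intro a ha
    show X.image (· + (-a)) = X
    have h : (X.image (· + a)).image (· + (-a)) = X := by
      rw [img_add]; simp
    rwa [ha] at h

private lemma stab_card_eq {k : ℕ} [NeZero v] (hk : 2 ≤ k)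
    (B : Finset (Finset (ZMod v)))
    (hsize : ∀ b ∈ B, b.card = k)
    (hpair : ∀ b₁ ∈ B, ∀ b₂ ∈ B, ∀ x y : ZMod v,
      x ≠ y → x ∈ b₁ → y ∈ b₁ → x ∈ b₂ → y ∈ b₂ → b₁ = b₂)
    (hclo : ∀ b ∈ B, ∀ t : ZMod v, b.image (· + t) ∈ B)
    (X : Finset (ZMod v)) (hXB : X ∈ B)
    (t₀ : ZMod v) (ht₀ : t₀ ≠ 0) (hfix : X.image (· + t₀) = X) :
    (Finset.univ.filter fun t : ZMod v => X.image (· + t) = X).card = k := by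
  classical
  set H := Finset.univ.filter (fun t : ZMod v => X.image (· + t) = X) with hH
  have hmemH : ∀ t : ZMod v, t ∈ H ↔ X.image (· + t) = X := by
    intro t; simp [hH]
  have hstep : ∀ t ∈ H, ∀ x ∈ X, x + t ∈ X := by
    intro t ht x hx
    rw [hmemH] at ht
    rw [← ht]
    exact Finset.mem_image_of_mem _ hx
  have hXk : X.card = k := hsize X hXB
  have hne : X.Nonempty := by
    rw [← Finset.card_pos, hXk]; omega
  obtain ⟨x₀, hx₀⟩ := hne
  -- upper bound
  have hub : H.card ≤ k := by
    rw [← hXk]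
    apply Finset.card_le_card_of_injOn (fun t => x₀ + t)
    · intro t ht
      exact hstep t ht x₀ hx₀
    · intro a _ b _ hab
      exact add_left_cancel hab
  -- the orbit
  set O := Finset.univ.image (fun s : ZMod v => X.image (· + s)) with hO
  have hOB : ∀ T ∈ O, T ∈ B := by
    intro T hT
    obtain ⟨s, _, rfl⟩ := Finset.mem_image.mp hT
    exact hclo X hXB s
  have hOcard : ∀ T ∈ O, T.card = k := fun T hT => hsize T (hOB T hT)
  have ht₀H : t₀ ∈ H := (hmemH t₀).mpr hfix
  have hshift : ∀ T ∈ O, ∀ y ∈ T, y + t₀ ∈ T := by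
    intro T hT y hy
    obtain ⟨s, _, rfl⟩ := Finset.mem_image.mp hT
    obtain ⟨x, hx, rfl⟩ := Finset.mem_image.mp hy
    have h1 : x + t₀ ∈ X := hstep t₀ ht₀H x hx
    have h2 : (x + t₀) + s ∈ X.image (· + s) := Finset.mem_image_of_mem _ h1
    simpa [add_right_comm] using h2
  have hdisj : ∀ T₁ ∈ O, ∀ T₂ ∈ O, T₁ ≠ T₂ → Disjoint T₁ T₂ := by
    intro T₁ h1 T₂ h2 hneq
    rw [Finset.disjoint_left]
    intro y hy1 hy2
    refine hneq (hpair T₁ (hOB _ h1) T₂ (hOB _ h2) y (y + t₀) ?_ hy1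
      (hshift _ h1 y hy1) hy2 (hshift _ h2 y hy2))
    intro h
    exact ht₀ (by simpa using (left_eq_add.mp h))
  -- |O| * k ≤ v
  have hOk : O.card * k ≤ v := by
    have h1 : (O.biUnion (fun T => T)).card = O.card * k := by
      rw [Finset.card_biUnion hdisj]
      rw [Finset.sum_congr rfl (fun T hT => hOcard T hT)]
      simp [mul_comm]
    calc O.card * k = (O.biUnion (fun T => T)).card := h1.symm
      _ ≤ (Finset.univ : Finset (ZMod v)).card := Finset.card_le_card (Finset.subset_univ _)
      _ = v := by rw [Finset.card_univ, ZMod.card]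
  -- orbit-stabilizer : v = |O| * |H|
  have hfib : ∀ T ∈ O,
      (Finset.univ.filter fun s : ZMod v => X.image (· + s) = T).card = H.card := by
    intro T hT
    obtain ⟨s₀, _, rfl⟩ := Finset.mem_image.mp hT
    apply Finset.card_nbij' (fun s => s - s₀) (fun h => h + s₀)
    · intro s hs
      rw [Finset.mem_coe, Finset.mem_filter] at hs
      rw [Finset.mem_coe, hmemH]
      have h1 := congrArg (fun S : Finset (ZMod v) => S.image (· + (-s₀))) hs.2
      simp only [img_add] at h1
      rw [add_neg_cancel] at h1
      simp only [sub_eq_add_neg]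
      simpa using h1
    · intro h hh
      rw [Finset.mem_coe, hmemH] at hh
      rw [Finset.mem_coe, Finset.mem_filter]
      refine ⟨Finset.mem_univ _, ?_⟩
      rw [← img_add, hh]
    · intro s _; simp
    · intro h _; simp
  have hOS : O.card * H.card = v := by
    have h1 := Finset.card_eq_sum_card_image (fun s : ZMod v => X.image (· + s))
      (Finset.univ : Finset (ZMod v))
    rw [Finset.sum_congr rfl hfib] at h1
    simp only [Finset.sum_const, smul_eq_mul, Finset.card_univ, ZMod.card] at h1
    omega
  have hOpos : 0 < O.card := by
    rw [Finset.card_pos, hO]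
    exact ⟨X.image (· + (0 : ZMod v)), Finset.mem_image_of_mem _ (Finset.mem_univ 0)⟩
  have hlb : k ≤ H.card := by
    have h1 : O.card * k ≤ O.card * H.card := by rw [hOS]; exact hOk
    exact Nat.le_of_mul_le_mul_left h1 hOpos
  omega

end Aux

/-- The block set of any cyclic (v,k)-configuration (2 ≤ k ≤ v) is the set of all v
translates of a single block X, and X is a (v,k)-modular Golomb ruler. -/
theorem cyclic_config_gives_MGR (v k : ℕ) (hk : 2 ≤ k) (hkv : k ≤ v)
    (B : Finset (Finset (ZMod v))) (hB : IsConfig v k B)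
    (hcyc : CyclicBlocks v B) :
    ∃ X ∈ B, IsMGR v k X ∧ B = AllTranslates v X := by
  classical
  haveI : NeZero v := ⟨by omega⟩
  obtain ⟨hcard, hsize, hpair, hpt⟩ := hB
  have hclo := closure_lemma B hcyc
  -- torsion related: for a block with full stabilizer, the stabilizer is the k-torsion
  have key : ∃ X ∈ B, ∀ t : ZMod v, X.image (· + t) = X → t = 0 := by
    by_contra hcon
    push_neg at hcon
    -- every block containing 0 equals the k-torsion subgroup's finset
    have hblock0 : ∀ Z ∈ B, (0 : ZMod v) ∈ Z →
        Z = Finset.univ.filter (fun t : ZMod v => k • t = 0) := by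
      intro Z hZB h0Z
      obtain ⟨t₀, hfix, ht₀⟩ := hcon Z hZB
      set H := Finset.univ.filter (fun t : ZMod v => Z.image (· + t) = Z) with hH
      have hHk : H.card = k :=
        stab_card_eq hk B hsize hpair hclo Z hZB t₀ ht₀ hfix
      have hHsubZ : H ⊆ Z := by
        intro t ht
        rw [hH, Finset.mem_filter] at ht
        have h1 : (0 : ZMod v) + t ∈ Z.image (· + t) := Finset.mem_image_of_mem _ h0Z
        rw [ht.2] at h1
        simpa using h1
      have hZH : Z = H := by
        refine (Finset.eq_of_subset_of_card_le hHsubZ ?_).symm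
        rw [hHk, hsize Z hZB]
      -- each element of H is k-torsion
      haveI : DecidablePred (· ∈ stabSub (v := v) Z) :=
        fun t => decidable_of_iff (Z.image (· + t) = Z) Iff.rfl
      have hcardsub : Nat.card (stabSub (v := v) Z) = k := by
        rw [Nat.card_eq_fintype_card, Fintype.card_subtype]
        rw [← hHk, hH]
        congr 1
        apply Finset.filter_congr
        intro t _
        exact Iff.rfl
      have htors : ∀ t ∈ H, k • t = 0 := by
        intro t ht
        rw [hH, Finset.mem_filter] at ht
        have htmem : t ∈ stabSub (v := v) Z := ht.2
        have h1 : Nat.card (stabSub (v := v) Z) • (⟨t, htmem⟩ : stabSub (v := v) Z) = 0 :=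
          card_nsmul_eq_zero'
        rw [hcardsub] at h1
        have h2 := congrArg (fun x : stabSub (v := v) Z => (x : ZMod v)) h1
        simpa using h2
      -- the k-torsion has at most k elements, so H is exactly the torsion finset
      have hTle : (Finset.univ.filter (fun t : ZMod v => k • t = 0)).card ≤ k := by
        have h1 := IsAddCyclic.card_nsmul_eq_zero_le (α := ZMod v) (n := k) (by omega)
        calc (Finset.univ.filter (fun t : ZMod v => k • t = 0)).card
            ≤ ({a : ZMod v | k • a = 0} : Finset (ZMod v)).card := by
              apply Finset.card_le_card
              intro t ht
              rw [Finset.mem_filter] at ht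
              simpa [nsmul_eq_mul] using ht.2
          _ ≤ k := h1
      have hHsubT : H ⊆ Finset.univ.filter (fun t : ZMod v => k • t = 0) := by
        intro t ht
        rw [Finset.mem_filter]
        exact ⟨Finset.mem_univ _, htors t ht⟩
      have hHT : H = Finset.univ.filter (fun t : ZMod v => k • t = 0) :=
        Finset.eq_of_subset_of_card_le hHsubT (by rw [hHk]; exact hTle)
      rw [hZH, hHT]
    -- two distinct blocks through 0 give a contradiction
    have h2blocks : 1 < (B.filter (fun b => (0 : ZMod v) ∈ b)).card := by
      rw [hpt 0]; omega
    obtain ⟨X, hX, Y, hY, hXY⟩ := Finset.one_lt_card.mp h2blocks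
    rw [Finset.mem_filter] at hX hY
    exact hXY ((hblock0 X hX.1 hX.2).trans (hblock0 Y hY.1 hY.2).symm)
  obtain ⟨X, hXB, hstab⟩ := key
  have hcancel : ∀ a b : ZMod v, X.image (· + a) = X.image (· + b) → a = b := by
    intro a b hab
    have h1 := congrArg (fun S : Finset (ZMod v) => S.image (· + (-b))) hab
    simp only [img_add, add_neg_cancel] at h1
    have h2 : X.image (· + (a + -b)) = X := by simpa using h1
    have h3 := hstab _ h2
    have : a - b = 0 := by rwa [sub_eq_add_neg]
    exact sub_eq_zero.mp this
  refine ⟨X, hXB, ⟨⟨hsize X hXB, ?_⟩, ?_⟩⟩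
  · -- Golomb property
    intro a ha b hb c hc d hd h
    by_cases hab : a = b
    · left
      refine ⟨hab, ?_⟩
      have : c - d = 0 := by rw [← h, hab, sub_self]
      exact sub_eq_zero.mp this
    · right
      have hcd : c ≠ d := by
        intro hcd
        apply hab
        apply sub_eq_zero.mp
        rw [h, hcd, sub_self]
      set s := c - a with hs
      have hc' : c ∈ X.image (· + s) := by
        have : a + s ∈ X.image (· + s) := Finset.mem_image_of_mem _ ha
        simpa [hs] using this
      have hd' : d ∈ X.image (· + s) := by
        have : b + s ∈ X.image (· + s) := Finset.mem_image_of_mem _ hb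
        have hbd : b + s = d := by rw [hs]; linear_combination -h
        rwa [hbd] at this
      have hXs : X.image (· + s) ∈ B := hclo X hXB s
      have heq : X = X.image (· + s) :=
        hpair X hXB (X.image (· + s)) hXs c d hcd hc hd hc' hd'
      have hs0 : s = 0 := hstab s heq.symm
      have hac : a = c := by
        have : c - a = 0 := hs0
        exact (sub_eq_zero.mp this).symm
      exact ⟨hac, by linear_combination hac - h⟩
  · -- B = AllTranslates v X
    have hsub : AllTranslates v X ⊆ B := by
      intro b hb
      rw [AllTranslates, Finset.mem_image] at hb
      obtain ⟨t, _, rfl⟩ := hb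
      exact hclo X hXB _
    have hcard2 : (AllTranslates v X).card = v := by
      rw [AllTranslates, Finset.card_image_of_injOn, Finset.card_range]
      intro t₁ ht₁ t₂ ht₂ h
      rw [Finset.coe_range, Set.mem_Iio] at ht₁ ht₂
      have h1 : ((t₁ : ℕ) : ZMod v) = ((t₂ : ℕ) : ZMod v) := hcancel _ _ h
      have := congrArg ZMod.val h1
      rwa [ZMod.val_cast_of_lt ht₁, ZMod.val_cast_of_lt ht₂] at this
    exact (Finset.eq_of_subset_of_card_le hsub (by rw [hcard2, hcard])).symm
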